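/- Let n ≥ 3 and define the linear map t : ℚ^P → ℚ^n by t(E^{ij}) = (e^i + e^j)/(n−2) − 𝟙/((n−2)(n−1)), where 𝟙 = (1,…,1) ∈ ℚ^n. Then t ∘ deg* is the identity on ℚ^n; that is, t is a (rational) retraction of the weight map deg*. (This is the canonical symmetric section used in Proposition 6.2.) -/

import Mathlib

/-- The index set of the Plücker coordinates: ordered pairs `i < j` in `Fin n`,
representing the 2-element subsets `{i,j}` of `{1,…,n}`. -/
abbrev PluckerPairs (n : ℕ) := {q : Fin n × Fin n // q.1 < q.2}

/-- The weight map `deg* : ℚ^n → ℚ^P`, determined by `deg*(e^i) = Σ_{j ≠ i} E^{ij}`;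
equivalently `deg*(v)_{ij} = v_i + v_j`. -/
def degStar (n : ℕ) : (Fin n → ℚ) →ₗ[ℚ] (PluckerPairs n → ℚ) where
  toFun v := fun q => v q.1.1 + v q.1.2
  map_add' u v := by funext q; simp [Pi.add_apply]; ring
  map_smul' c v := by funext q; simp [Pi.smul_apply, smul_eq_mul]; ring

/-- The basis vector `E^{ij} = E^{ji}` of `ℚ^P` (for `i ≠ j`). -/
def EPair {n : ℕ} (i j : Fin n) : PluckerPairs n → ℚ :=
  fun q => if (q : Fin n × Fin n) = (i, j) ∨ (q : Fin n × Fin n) = (j, i) then 1 else 0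

lemma degStar_single (n : ℕ) (k : Fin n) :
    degStar n (Pi.single k (1:ℚ)) = ∑ j ∈ Finset.univ \ {k}, EPair k j := by
  funext p
  obtain ⟨⟨a, b⟩, hab⟩ := p
  have hne : a ≠ b := ne_of_lt hab
  simp only [degStar, LinearMap.coe_mk, AddHom.coe_mk, Finset.sum_apply, EPair,
    Pi.single_apply]
  by_cases ha : a = k
  · subst ha
    have hb : b ≠ a := hne.symm
    rw [Finset.sum_eq_single_of_mem b (by simp [hb])]
    · simp [hne, hb]
    · intro j hj hjb
      simp only [Finset.mem_sdiff, Finset.mem_singleton] at hj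
      rw [if_neg]
      simp only [Prod.mk.injEq]
      rintro (⟨-, h⟩ | ⟨h1, -⟩)
      · exact hjb h.symm
      · exact hj.2 h1.symm
  · by_cases hb : b = k
    · subst hb
      rw [Finset.sum_eq_single_of_mem a (by simp [ha])]
      · simp [ha, hne]
      · intro j hj hja
        simp only [Finset.mem_sdiff, Finset.mem_singleton] at hj
        rw [if_neg]
        simp only [Prod.mk.injEq]
        rintro (⟨h1, -⟩ | ⟨h2, -⟩)
        · exact ha h1
        · exact hja h2.symm
    · rw [Finset.sum_eq_zero]
      · simp [ha, hb]
      · intro j hj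
        rw [if_neg]
        simp only [Prod.mk.injEq]
        rintro (⟨h1, -⟩ | ⟨-, h2⟩)
        · exact ha h1
        · exact hb h2

/-- The canonical symmetric rational retraction of Proposition 6.2: any linear map
`t : ℚ^P → ℚ^n` with `t(E^{ij}) = (e^i + e^j)/(n−2) − 𝟙/((n−2)(n−1))` satisfies
`t ∘ deg* = id`. -/
theorem retraction_of_degStar
    (n : ℕ) (hn : 3 ≤ n) (t : (PluckerPairs n → ℚ) →ₗ[ℚ] (Fin n → ℚ))
    (ht : ∀ i j : Fin n, i ≠ j →
      t (EPair i j) = ((n : ℚ) - 2)⁻¹ • (Pi.single i 1 + Pi.single j 1)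
        - (((n : ℚ) - 2) * ((n : ℚ) - 1))⁻¹ • (fun _ : Fin n => (1 : ℚ))) :
    ∀ v : Fin n → ℚ, t (degStar n v) = v := by
  have h3 : (3:ℚ) ≤ n := by exact_mod_cast hn
  have hn2 : ((n : ℚ) - 2) ≠ 0 := by linarith
  have hn1 : ((n : ℚ) - 1) ≠ 0 := by linarith
  have hcast : ((n - 1 : ℕ) : ℚ) = (n : ℚ) - 1 := by
    rw [Nat.cast_sub (by omega)]; norm_num
  have key : ∀ k : Fin n, t (degStar n (Pi.single k (1:ℚ))) = Pi.single k 1 := by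
    intro k
    rw [degStar_single, map_sum]
    rw [Finset.sum_congr rfl (fun j hj => ht k j (by
      simp only [Finset.mem_sdiff, Finset.mem_singleton] at hj
      exact fun h => hj.2 h.symm))]
    funext m
    simp only [Finset.sum_apply, Pi.sub_apply, Pi.smul_apply, Pi.add_apply,
      Pi.single_apply, smul_eq_mul, mul_one]
    rw [Finset.sum_sub_distrib]
    rw [Finset.sum_const, Finset.card_sdiff_of_subset (by simp), Finset.card_univ]
    simp only [Fintype.card_fin, Finset.card_singleton, nsmul_eq_mul, hcast]
    simp only [mul_add, Finset.sum_add_distrib, Finset.sum_const,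
      Finset.card_sdiff_of_subset (by simp : {k} ⊆ Finset.univ), Finset.card_univ,
      Fintype.card_fin, Finset.card_singleton, nsmul_eq_mul, hcast,
      mul_ite, mul_one, mul_zero, Finset.sum_ite_eq]
    by_cases hm : m = k
    · subst hm
      rw [if_pos rfl, if_pos rfl, if_neg (by simp)]
      field_simp
      ring
    · simp only [if_neg hm, Finset.mem_sdiff, Finset.mem_univ, Finset.mem_singleton, hm,
        not_false_iff, and_self, if_pos, if_false]
      field_simp
      ring
  intro v
  have hv : v = ∑ k, v k • (Pi.single k 1 : Fin n → ℚ) := by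
    funext m
    simp [Pi.single_apply]
  conv_lhs => rw [hv]
  rw [map_sum, map_sum]
  simp only [map_smul, key]
  exact hv.symm
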